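/- (Theorem A: uniqueness of interval decompositions.) Let P be a poset and V a persistence module indexed by P with two interval decompositions V = ⊕_{U ∈ A} U and V = ⊕_{W ∈ B} W. Let I be an interval in P, and set C = {U ∈ A | U ≅ M(I)} and C' = {W ∈ B | W ≅ M(I)}. Then |C| = |C'| (the sets C and C' have the same cardinality, possibly infinite). -/

import Mathlib

universe u v w w'

/-- A persistence module indexed by a poset `P`, over a field `k`. -/
structure PersMod (k : Type u) [Field k] (P : Type v) [PartialOrder P] :
    Type (max u v (w + 1)) where
  space : P → Type w
  [acg : ∀ x, AddCommGroup (space x)]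
  [mod : ∀ x, Module k (space x)]
  map : ∀ {x y : P}, x ≤ y → (space x →ₗ[k] space y)
  map_id : ∀ x : P, map (le_refl x) = LinearMap.id
  map_comp : ∀ {x y z : P} (hxy : x ≤ y) (hyz : y ≤ z),
    (map hyz).comp (map hxy) = map (hxy.trans hyz)

attribute [instance] PersMod.acg PersMod.mod

variable (k : Type u) [Field k] {P : Type v} [PartialOrder P]

/-- A morphism of persistence modules (a natural transformation). -/
structure PersHom (V : PersMod.{u, v, w} k P) (W : PersMod.{u, v, w'} k P) where
  app : ∀ x : P, V.space x →ₗ[k] W.space x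
  natural : ∀ {x y : P} (h : x ≤ y) (v : V.space x),
    app y (V.map h v) = W.map h (app x v)

/-- An isomorphism of persistence modules. -/
structure PersIso (V : PersMod.{u, v, w} k P) (W : PersMod.{u, v, w'} k P) where
  app : ∀ x : P, V.space x ≃ₗ[k] W.space x
  natural : ∀ {x y : P} (h : x ≤ y) (v : V.space x),
    app y (V.map h v) = W.map h (app x v)

/-- A subset `I` of a poset is convex if `x ≤ y ≤ z`, `x ∈ I`, `z ∈ I` imply `y ∈ I`. -/
def IsConvexIn (I : Set P) : Prop :=
  ∀ ⦃x y z : P⦄, x ∈ I → z ∈ I → x ≤ y → y ≤ z → y ∈ I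

/-- A subset `I` of a poset is connected if any two points of `I` are joined by a
zigzag path inside `I`. -/
def IsConnectedIn (I : Set P) : Prop :=
  ∀ x ∈ I, ∀ z ∈ I, ∃ (n : ℕ) (c : ℕ → P), (∀ i ≤ n, c i ∈ I) ∧ c 0 = x ∧ c n = z ∧
    ∀ i < n, c i ≤ c (i + 1) ∨ c (i + 1) ≤ c i

/-- An interval in a poset: nonempty, convex and connected. -/
def IsPosetInterval (I : Set P) : Prop :=
  I.Nonempty ∧ IsConvexIn I ∧ IsConnectedIn I

open Classical in
/-- The subspace of `k` used as the value of the constant module at `x`. -/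
noncomputable def constSub (I : Set P) (x : P) : Submodule k k :=
  if x ∈ I then ⊤ else ⊥

open Classical in
/-- The structure map of the constant module. -/
noncomputable def constMap (I : Set P) (x y : P) :
    constSub k I x →ₗ[k] constSub k I y :=
  LinearMap.codRestrict (constSub k I y)
    ((if y ∈ I then (LinearMap.id : k →ₗ[k] k) else 0).comp (constSub k I x).subtype)
    (fun c => by
      by_cases hy : y ∈ I
      · simp [constSub, hy]
      · simp only [hy, if_false, LinearMap.zero_comp, LinearMap.zero_apply]
        exact Submodule.zero_mem _)

open Classical in
/-- The constant (interval) module `M(I)` attached to a convex subset `I`. -/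
noncomputable def constMod (I : Set P) (hI : IsConvexIn I) : PersMod.{u, v, u} k P where
  space x := constSub k I x
  map {x y} _ := constMap k I x y
  map_id := fun x => by
    ext c
    by_cases hx : x ∈ I
    · simp [constMap, hx]
    · have hc : (c : k) = 0 := by
        have := c.2
        simpa only [constSub, hx, if_false, Submodule.mem_bot] using this
      simp [constMap, hx, hc]
  map_comp := fun {x y z} hxy hyz => by
    ext c
    by_cases hz : z ∈ I
    · by_cases hy : y ∈ I
      · simp [constMap, hy, hz]
      · have hx : x ∉ I := fun hx => hy (hI hx hz hxy hyz)
        have hc : (c : k) = 0 := by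
          have := c.2
          simpa only [constSub, hx, if_false, Submodule.mem_bot] using this
        simp [constMap, hy, hz, hc]
    · simp [constMap, hz]

/-- A submodule of a persistence module: a family of subspaces preserved by the
structure maps. -/
structure PersSubmod (V : PersMod.{u, v, w} k P) where
  carrier : ∀ x : P, Submodule k (V.space x)
  mapLe : ∀ {x y : P} (h : x ≤ y), ∀ v ∈ carrier x, V.map h v ∈ carrier y

/-- A submodule of a persistence module, viewed as a persistence module in its own
right. -/
def PersSubmod.toPersMod {V : PersMod.{u, v, w} k P} (U : PersSubmod k V) :
    PersMod.{u, v, w} k P where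
  space x := U.carrier x
  map {x y} h := (V.map h).restrict (U.mapLe h)
  map_id := fun x => by
    ext c
    simp [LinearMap.restrict_apply, V.map_id]
  map_comp := fun {x y z} hxy hyz => by
    ext c
    have := LinearMap.congr_fun (V.map_comp hxy hyz) (c : V.space x)
    simpa [LinearMap.restrict_apply] using this

/-- A persistence module is an interval module if it is isomorphic to a constant
module `M(I)` for some interval `I`. -/
def IsIntervalModule (V : PersMod.{u, v, w} k P) : Prop :=
  ∃ (I : Set P) (hI : IsPosetInterval I), Nonempty (PersIso k V (constMod k I hI.2.1))

/-- `A` is an internal direct sum decomposition of `V`: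
at each point the subspaces are independent and span everything. -/
def IsDecomp (V : PersMod.{u, v, w} k P) (A : Set (PersSubmod k V)) : Prop :=
  ∀ x : P, iSupIndep (fun U : A => (U : PersSubmod k V).carrier x) ∧
    ⨆ U : A, (U : PersSubmod k V).carrier x = ⊤

/-- An interval decomposition of `V`. -/
def IsIntervalDecomp (V : PersMod.{u, v, w} k P) (A : Set (PersSubmod k V)) : Prop :=
  IsDecomp k V A ∧ ∀ U ∈ A, IsIntervalModule k U.toPersMod

/-- `V` has an interval decomposition. -/
def HasIntervalDecomp (V : PersMod.{u, v, w} k P) : Prop :=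
  ∃ A : Set (PersSubmod k V), IsIntervalDecomp k V A

section UniquenessProof

open scoped Classical

namespace IntervalUnique

variable {k}

/-- Walk a property along a zigzag chain in a connected set. -/
theorem chain_prop {I : Set P} (hconn : IsConnectedIn I) {x y : P} (hx : x ∈ I) (hy : y ∈ I)
    (p : P → Prop) (hp : p x)
    (step : ∀ a b : P, a ∈ I → b ∈ I → (a ≤ b ∨ b ≤ a) → p a → p b) : p y := by
  obtain ⟨n, c, hmem, h0, hn, hcomp⟩ := hconn x hx y hy
  have key : ∀ i, i ≤ n → p (c i) := by
    intro i
    induction i with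
    | zero => intro _; rwa [h0]
    | succ m ih =>
      intro him
      exact step _ _ (hmem m (by omega)) (hmem (m + 1) him) (hcomp m (by omega)) (ih (by omega))
  have := key n le_rfl
  rwa [hn] at this

theorem constMap_coe {J : Set P} (x y : P) (c : constSub k J x) :
    (constMap k J x y c).1 = if y ∈ J then c.1 else 0 := by
  by_cases hy : y ∈ J <;> simp [constMap, hy]

variable {V : PersMod.{u, v, w} k P}

/-- A compatible family of vectors over a subset `E`. -/
def IsSecOn (V : PersMod.{u, v, w} k P) (E : Set P) (s : ∀ x : P, V.space x) : Prop :=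
  ∀ ⦃x y : P⦄ (h : x ≤ y), x ∈ E → y ∈ E → V.map h (s x) = s y

/-- The family vanishes when mapped out of `I` upwards. -/
def Vanish (V : PersMod.{u, v, w} k P) (I : Set P) (s : ∀ x : P, V.space x) : Prop :=
  ∀ ⦃x y : P⦄ (h : x ≤ y), x ∈ I → y ∉ I → V.map h (s x) = 0

theorem map_via_iso {U : PersSubmod k V} {J : Set P} {hJc : IsConvexIn J}
    (φ : PersIso k (PersSubmod.toPersMod k U) (constMod k J hJc)) {x y : P} (h : x ≤ y)
    (u : U.carrier x) :
    V.map h u.1 = ((φ.app y).symm (constMap k J x y (φ.app x u)) : U.carrier y).1 := by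
  have hnat := φ.natural h u
  have h2 : (PersSubmod.toPersMod k U).map h u = (φ.app y).symm (constMap k J x y (φ.app x u)) := by
    have : (φ.app y).symm (φ.app y ((PersSubmod.toPersMod k U).map h u))
        = (φ.app y).symm (constMap k J x y (φ.app x u)) := by rw [hnat]; rfl
    rwa [LinearEquiv.symm_apply_apply] at this
  have h3 : ((PersSubmod.toPersMod k U).map h u).1 = V.map h u.1 := rfl
  rw [← h3, h2]

/-- The value in `k` of a carrier element under the iso to the constant module. -/
noncomputable def cval {U : PersSubmod k V} {J : Set P} {hJc : IsConvexIn J}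
    (φ : PersIso k (PersSubmod.toPersMod k U) (constMod k J hJc)) (x : P)
    (u : U.carrier x) : k :=
  (φ.app x u).1

theorem sec_val_step {U : PersSubmod k V} {J : Set P} {hJc : IsConvexIn J}
    (φ : PersIso k (PersSubmod.toPersMod k U) (constMod k J hJc)) {x y : P} (h : x ≤ y)
    (u : U.carrier x) (wv : U.carrier y) (hmap : V.map h u.1 = wv.1) :
    cval φ y wv = if y ∈ J then cval φ x u else 0 := by
  have h1 := map_via_iso φ h u
  rw [hmap] at h1
  have h2 : wv = (φ.app y).symm (constMap k J x y (φ.app x u)) := Subtype.ext h1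
  unfold cval
  erw [h2, LinearEquiv.apply_symm_apply]
  exact constMap_coe x y _

theorem carrier_zero {U : PersSubmod k V} {J : Set P} {hJc : IsConvexIn J}
    (φ : PersIso k (PersSubmod.toPersMod k U) (constMod k J hJc)) {x : P} (hx : x ∉ J)
    (u : U.carrier x) : u.1 = 0 := by
  have h1 : φ.app x u = 0 := by
    apply Subtype.ext
    have h2 := (φ.app x u).2
    exact (by simpa only [constSub, hx, if_false, Submodule.mem_bot] using h2 : (show constSub k J x from φ.app x u).1 = 0)
  have h3 : u = 0 := by
    have := congrArg (φ.app x).symm h1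
    exact (φ.app x).injective (h1.trans (map_zero _).symm)
  rw [h3]
  rfl

/-- The space of values at `x₀` of sections over `I` vanishing above `I`. -/
noncomputable def Wsub (V : PersMod.{u, v, w} k P) (I : Set P) (x₀ : P) :
    Submodule k (V.space x₀) where
  carrier := {v | ∃ s : ∀ x : P, V.space x, IsSecOn V I s ∧ Vanish V I s ∧ s x₀ = v}
  add_mem' := by
    rintro a b ⟨s, hs1, hs2, rfl⟩ ⟨t, ht1, ht2, rfl⟩
    refine ⟨s + t, fun x y h hx hy => ?_, fun x y h hx hy => ?_, rfl⟩
    · simp [map_add, hs1 h hx hy, ht1 h hx hy]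
    · simp [map_add, hs2 h hx hy, ht2 h hx hy]
  zero_mem' := ⟨0, fun x y h hx hy => by simp, fun x y h hx hy => by simp, rfl⟩
  smul_mem' := by
    rintro c a ⟨s, hs1, hs2, rfl⟩
    refine ⟨c • s, fun x y h hx hy => ?_, fun x y h hx hy => ?_, rfl⟩
    · simp [map_smul, hs1 h hx hy]
    · simp [map_smul, hs2 h hx hy]

/-- Values of sections extending to one extra point below `I`. -/
def SsetGen (V : PersMod.{u, v, w} k P) (I : Set P) (x₀ : P) : Set (V.space x₀) :=
  {v | ∃ y₀ ∉ I, (∃ x₁ ∈ I, y₀ ≤ x₁) ∧ ∃ t : ∀ x : P, V.space x,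
    IsSecOn V (insert y₀ I) t ∧ Vanish V I t ∧ t x₀ = v}

noncomputable def Ssub (V : PersMod.{u, v, w} k P) (I : Set P) (x₀ : P) :
    Submodule k (V.space x₀) :=
  Submodule.span k (SsetGen V I x₀)

/-- The relation subspace defining the colimit over `I`. -/
noncomputable def Rrel (V : PersMod.{u, v, w} k P) (I : Set P) :
    Submodule k (Π₀ x : P, V.space x) :=
  Submodule.span k {f | ∃ (x y : P) (h : x ≤ y) (a : V.space x), x ∈ I ∧ y ∈ I ∧
    f = DFinsupp.lsingle (R := k) x a - DFinsupp.lsingle (R := k) y (V.map h a)}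

noncomputable def Ksub (V : PersMod.{u, v, w} k P) (I : Set P) (x₀ : P) :
    Submodule k (V.space x₀) :=
  (Rrel V I).comap (DFinsupp.lsingle (R := k) x₀)

noncomputable def Nsub (V : PersMod.{u, v, w} k P) (I : Set P) (x₀ : P) :
    Submodule k (V.space x₀) :=
  Ssub V I x₀ ⊔ Ksub V I x₀

/-- The canonical element `1` (or `0`) of the constant module. -/
noncomputable def oneConst (I : Set P) (x : P) : constSub k I x :=
  if hx : x ∈ I then ⟨1, by simp [constSub, hx]⟩ else 0

theorem oneConst_val {I : Set P} {x : P} (hx : x ∈ I) : (oneConst (k := k) I x).1 = 1 := by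
  simp [oneConst, hx]

/-- The canonical section of a summand isomorphic to `M(I)`. -/
noncomputable def secU {U : PersSubmod k V} {I : Set P} {hIc : IsConvexIn I}
    (φ : PersIso k (PersSubmod.toPersMod k U) (constMod k I hIc)) : ∀ x : P, V.space x :=
  fun x => ((φ.app x).symm (oneConst I x) : U.carrier x).1

theorem secU_mem {U : PersSubmod k V} {I : Set P} {hIc : IsConvexIn I}
    (φ : PersIso k (PersSubmod.toPersMod k U) (constMod k I hIc)) (x : P) :
    secU φ x ∈ U.carrier x :=
  ((φ.app x).symm (oneConst I x) : U.carrier x).2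

theorem secU_sec {U : PersSubmod k V} {I : Set P} {hIc : IsConvexIn I}
    (φ : PersIso k (PersSubmod.toPersMod k U) (constMod k I hIc)) :
    IsSecOn V I (secU φ) := by
  intro x y h hx hy
  erw [show secU φ x = ((φ.app x).symm (oneConst I x) : U.carrier x).1 from rfl,
    map_via_iso φ h]
  have h1 : constMap k I x y (φ.app x ((φ.app x).symm (oneConst I x))) = oneConst I y := by
    apply Subtype.ext
    erw [LinearEquiv.apply_symm_apply, constMap_coe, oneConst_val hx, oneConst_val hy, if_pos hy]
  rw [h1]
  rfl

theorem secU_vanish {U : PersSubmod k V} {I : Set P} {hIc : IsConvexIn I}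
    (φ : PersIso k (PersSubmod.toPersMod k U) (constMod k I hIc)) :
    Vanish V I (secU φ) := by
  intro x y h hx hy
  erw [show secU φ x = ((φ.app x).symm (oneConst I x) : U.carrier x).1 from rfl,
    map_via_iso φ h]
  have h1 : constMap k I x y (φ.app x ((φ.app x).symm (oneConst I x))) = 0 := by
    apply Subtype.ext
    erw [constMap_coe, if_neg hy]
    rfl
  rw [h1]
  exact congrArg Subtype.val (map_zero (φ.app y).symm)

/-- Any carrier element at `x₀` is the corresponding multiple of the canonical section. -/
theorem comp_smul {U : PersSubmod k V} {I : Set P} {hIc : IsConvexIn I}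
    (φ : PersIso k (PersSubmod.toPersMod k U) (constMod k I hIc)) {x₀ : P} (hx₀ : x₀ ∈ I)
    (u : U.carrier x₀) :
    u.1 = cval φ x₀ u • secU φ x₀ := by
  have h1 : φ.app x₀ u = cval φ x₀ u • oneConst I x₀ := by
    apply Subtype.ext
    have : (cval φ x₀ u • oneConst (k := k) I x₀).1 = cval φ x₀ u • (oneConst (k := k) I x₀).1 :=
      rfl
    erw [this, oneConst_val hx₀, smul_eq_mul, mul_one]
    rfl
  have h2 : u = cval φ x₀ u • (φ.app x₀).symm (oneConst I x₀) := by
    conv_lhs => rw [← LinearEquiv.symm_apply_apply (φ.app x₀) u]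
    erw [h1, map_smul]
  have h3 := congrArg Subtype.val h2
  rw [h3]
  rfl

theorem mem_Ksub {I : Set P} {x₀ : P} {v : V.space x₀} :
    v ∈ Ksub V I x₀ ↔ DFinsupp.lsingle (R := k) x₀ v ∈ Rrel V I := Iff.rfl

/-- Classification: a vanishing-above section valued in a summand isomorphic to `M(J)`,
`J ≠ I`, has value at `x₀` in the degenerate submodule `Nsub`. -/
theorem comp_mem_N {I : Set P} (hI : IsPosetInterval I) {x₀ : P} (hx₀ : x₀ ∈ I)
    {U : PersSubmod k V} {J : Set P} (hJ : IsPosetInterval J)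
    (φ : PersIso k (PersSubmod.toPersMod k U) (constMod k J hJ.2.1)) (hJI : J ≠ I)
    {s : ∀ x : P, V.space x} (hs : ∀ x, s x ∈ U.carrier x)
    (hsec : IsSecOn V I s) (hvan : Vanish V I s) :
    s x₀ ∈ Nsub V I x₀ := by
  set cu : ∀ x : P, U.carrier x := fun x => ⟨s x, hs x⟩ with hcu
  by_cases hIJ : I ⊆ J
  · -- the value is constant on I
    have hconst : ∀ y ∈ I, cval φ y (cu y) = cval φ x₀ (cu x₀) := by
      intro y hy
      refine chain_prop hI.2.2 hx₀ hy (fun z => cval φ z (cu z) = cval φ x₀ (cu x₀)) rfl ?_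
      rintro a b ha hb (hab | hba) hpa
      · have hst := sec_val_step φ hab (cu a) (cu b) (hsec hab ha hb)
        rw [hst, if_pos (hIJ hb), hpa]
      · have hst := sec_val_step φ hba (cu b) (cu a) (hsec hba hb ha)
        rw [if_pos (hIJ ha)] at hst
        rw [← hst]; exact hpa
    have hnotJI : ¬ J ⊆ I := fun hsub => hJI (hsub.antisymm hIJ)
    obtain ⟨j, hjJ, hjI⟩ := Set.not_subset.mp hnotJI
    by_cases hup : ∃ (a b : P) (_ : a ≤ b), a ∈ I ∧ b ∈ J ∧ b ∉ I
    · obtain ⟨a, b, hab, haI, hbJ, hbI⟩ := hup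
      have h0 : V.map hab (s a) = 0 := hvan hab haI hbI
      have h1 : cval φ a (cu a) = 0 := by
        have h2 := sec_val_step φ hab (cu a) (0 : U.carrier b) (by rw [h0]; rfl)
        rw [if_pos hbJ] at h2
        rw [← h2]
        unfold cval
        erw [map_zero]
        rfl
      have h3 : cval φ x₀ (cu x₀) = 0 := by rw [← hconst a haI]; exact h1
      have h4 : cu x₀ = 0 := by
        have h5 : φ.app x₀ (cu x₀) = 0 := by
          apply Subtype.ext
          rw [show (φ.app x₀ (cu x₀)).1 = cval φ x₀ (cu x₀) from rfl, h3]
          rfl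
        have h6 := congrArg (φ.app x₀).symm h5
        exact (φ.app x₀).injective (h5.trans (map_zero _).symm)
      have h7 : s x₀ = 0 := congrArg Subtype.val h4
      rw [h7]; exact zero_mem _
    · by_cases hdown : ∃ (a b : P) (_ : b ≤ a), a ∈ I ∧ b ∈ J ∧ b ∉ I
      · obtain ⟨a, b, hba, haI, hbJ, hbI⟩ := hdown
        have hc0mem : cval φ x₀ (cu x₀) ∈ constSub k J b := by simp [constSub, hbJ]
        set tb : U.carrier b := (φ.app b).symm ⟨cval φ x₀ (cu x₀), hc0mem⟩ with htb
        refine Submodule.mem_sup_left (Submodule.subset_span ?_)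
        have hx₀b : x₀ ≠ b := fun e => hbI (e ▸ hx₀)
        refine ⟨b, hbI, ⟨a, haI, hba⟩, Function.update s b tb.1, ?_, ?_, ?_⟩
        · intro x y h hx hy
          rcases hx with rfl | hxI
          · rcases hy with rfl | hyI
            · rw [Subsingleton.elim h (le_refl _), V.map_id]; rfl
            · have hyb : y ≠ x := fun e => hbI (e ▸ hyI)
              rw [Function.update_self, Function.update_of_ne hyb]
              rw [show V.map h tb.1 = V.map h tb.1 from rfl, map_via_iso φ h tb]
              have he : constMap k J x y (φ.app x tb) = φ.app y (cu y) := by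
                apply Subtype.ext
                erw [htb, LinearEquiv.apply_symm_apply, constMap_coe, if_pos (hIJ hyI)]
                exact (hconst y hyI).symm
              erw [he, LinearEquiv.symm_apply_apply]
          · rcases hy with rfl | hyI
            · have hxb : x ≠ y := fun e => hbI (e ▸ hxI)
              rw [Function.update_of_ne hxb, Function.update_self]
              rw [show V.map h (s x) = V.map h (cu x).1 from rfl, map_via_iso φ h (cu x)]
              have he : constMap k J x y (φ.app x (cu x)) = ⟨cval φ x₀ (cu x₀), hc0mem⟩ := by
                apply Subtype.ext
                erw [constMap_coe, if_pos hbJ]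
                exact hconst x hxI
              rw [he, htb]
            · have hxb : x ≠ b := fun e => hbI (e ▸ hxI)
              have hyb : y ≠ b := fun e => hbI (e ▸ hyI)
              rw [Function.update_of_ne hxb, Function.update_of_ne hyb]
              exact hsec h hxI hyI
        · intro x y h hx hy
          have hxb : x ≠ b := fun e => hbI (e ▸ hx)
          rw [Function.update_of_ne hxb]
          exact hvan h hx hy
        · rw [Function.update_of_ne hx₀b]
      · exfalso
        have hjmem : j ∈ I := by
          refine chain_prop hJ.2.2 (hIJ hx₀) hjJ (· ∈ I) hx₀ ?_
          rintro a b haJ hbJ (hab | hba) haI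
          · by_contra hbI; exact hup ⟨a, b, hab, haI, hbJ, hbI⟩
          · by_contra hbI; exact hdown ⟨a, b, hba, haI, hbJ, hbI⟩
        exact hjI hjmem
  · -- the class dies in the colimit
    obtain ⟨x₁, hx₁I, hx₁J⟩ := Set.not_subset.mp hIJ
    refine Submodule.mem_sup_right ?_
    rw [mem_Ksub]
    have key : DFinsupp.lsingle (R := k) x₀ (s x₀) - DFinsupp.lsingle (R := k) x₁ (s x₁)
        ∈ Rrel V I := by
      refine chain_prop hI.2.2 hx₀ hx₁I
        (fun z => DFinsupp.lsingle (R := k) x₀ (s x₀) - DFinsupp.lsingle (R := k) z (s z)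
          ∈ Rrel V I) (by simp) ?_
      rintro a b haI hbI (hab | hba) hpa
      · have hgen : DFinsupp.lsingle (R := k) a (s a) - DFinsupp.lsingle (R := k) b (s b)
            ∈ Rrel V I := by
          apply Submodule.subset_span
          exact ⟨a, b, hab, s a, haI, hbI, by rw [hsec hab haI hbI]⟩
        have hsum := Submodule.add_mem _ hpa hgen
        rwa [sub_add_sub_cancel] at hsum
      · have hgen : DFinsupp.lsingle (R := k) b (s b) - DFinsupp.lsingle (R := k) a (s a)
            ∈ Rrel V I := by
          apply Submodule.subset_span
          exact ⟨b, a, hba, s b, hbI, haI, by rw [hsec hba hbI haI]⟩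
        have hsum := Submodule.sub_mem _ hpa hgen
        rwa [sub_sub_sub_cancel_right] at hsum
    have hz : s x₁ = 0 := carrier_zero φ hx₁J (cu x₁)
    rw [hz] at key
    simpa using key

variable {A : Set (PersSubmod k V)}

/-- The equivalence coming from an internal direct sum decomposition. -/
noncomputable def decEquiv (hd : IsDecomp k V A) (x : P) :
    DirectSum (↥A) (fun U : A => ((U : PersSubmod k V).carrier x : Type w)) ≃ₗ[k] V.space x :=
  LinearEquiv.ofBijective
    (DirectSum.coeLinearMap fun U : A => (U : PersSubmod k V).carrier x)
    (DirectSum.isInternal_submodule_of_iSupIndep_of_iSup_eq_top (hd x).1 (hd x).2)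

/-- Projection onto a summand. -/
noncomputable def projA (hd : IsDecomp k V A) (x : P) (U : A) :
    V.space x →ₗ[k] ((U : PersSubmod k V).carrier x : Type w) :=
  (DirectSum.component k A (fun W : A => ((W : PersSubmod k V).carrier x : Type w)) U).comp
    (decEquiv hd x).symm.toLinearMap

theorem projA_of (hd : IsDecomp k V A) (x : P) (U U' : A)
    (wv : ((U' : PersSubmod k V).carrier x : Type w)) :
    projA hd x U (decEquiv hd x (DirectSum.lof k A _ U' wv))
      = if h : U' = U then h ▸ wv else 0 := by
  unfold projA
  rw [LinearMap.comp_apply]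
  rw [show ((decEquiv hd x).symm.toLinearMap (decEquiv hd x (DirectSum.lof k A _ U' wv)))
      = DirectSum.lof k A _ U' wv from (decEquiv hd x).symm_apply_apply _]
  rw [DirectSum.component.of]

theorem projA_mem (hd : IsDecomp k V A) (x : P) (U U' : A) (u : V.space x)
    (hu : u ∈ (U' : PersSubmod k V).carrier x) :
    (projA hd x U u).1 = if U = U' then u else 0 := by
  have hdec : decEquiv hd x (DirectSum.lof k A _ U' ⟨u, hu⟩) = u := by
    unfold decEquiv
    erw [LinearEquiv.ofBijective_apply]
    rw [show (DirectSum.lof k A (fun W : A => ((W : PersSubmod k V).carrier x : Type w)) U' ⟨u, hu⟩)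
      = DirectSum.of _ U' ⟨u, hu⟩ from rfl]
    exact DirectSum.coeLinearMap_of _ _ _
  conv_lhs => rw [← hdec]
  rw [projA_of]
  by_cases h : U' = U
  · subst h; simp
  · rw [dif_neg h, if_neg (Ne.symm h)]; rfl

theorem exists_projA_sum (hd : IsDecomp k V A) (x : P) (v : V.space x) :
    ∃ t : Finset A, (∀ U : A, U ∉ t → projA hd x U v = 0) ∧
      v = ∑ U ∈ t, (projA hd x U v).1 := by
  classical
  have hv : v = decEquiv hd x ((decEquiv hd x).symm v) := by
    rw [LinearEquiv.apply_symm_apply]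
  have happly : ∀ U : A, projA hd x U v = ((decEquiv hd x).symm v) U := fun U => rfl
  refine ⟨((decEquiv hd x).symm v).support, ?_, ?_⟩
  · intro U hU
    rw [happly]
    exact DFinsupp.notMem_support_iff.mp hU
  · have h2 := DirectSum.sum_support_of ((decEquiv hd x).symm v)
    have h3 := congrArg (decEquiv hd x) h2
    rw [map_sum] at h3
    conv_lhs => rw [hv, ← h3]
    refine Finset.sum_congr rfl ?_
    intro U hU
    rw [happly]
    show decEquiv hd x (DirectSum.of _ U _) = _
    unfold decEquiv
    erw [LinearEquiv.ofBijective_apply]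
    exact DirectSum.coeLinearMap_of _ _ _

theorem projA_natural (hd : IsDecomp k V A) {x y : P} (h : x ≤ y) (U : A) (v : V.space x) :
    (projA hd y U (V.map h v)).1 = V.map h (projA hd x U v).1 := by
  classical
  obtain ⟨t, ht0, htsum⟩ := exists_projA_sum hd x v
  have hmap : V.map h v = ∑ U' ∈ t, V.map h (projA hd x U' v).1 := by
    conv_lhs => rw [htsum]
    rw [map_sum]
  rw [hmap, map_sum]
  have hcoe : (∑ U' ∈ t, projA hd y U (V.map h (projA hd x U' v).1)).1
      = ∑ U' ∈ t, (projA hd y U (V.map h (projA hd x U' v).1)).1 := by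
    exact AddSubmonoidClass.coe_finset_sum _ _
  rw [hcoe]
  have hterm : ∀ U' ∈ t, (projA hd y U (V.map h (projA hd x U' v).1)).1
      = if U = U' then V.map h (projA hd x U' v).1 else 0 := by
    intro U' _
    exact projA_mem hd y U U' _ ((U' : PersSubmod k V).mapLe h _ (projA hd x U' v).2)
  rw [Finset.sum_congr rfl hterm, Finset.sum_ite_eq]
  by_cases hU : U ∈ t
  · rw [if_pos hU]
  · rw [if_neg hU, ht0 U hU]
    simp

theorem projA_sec (hd : IsDecomp k V A) {E : Set P} {s : ∀ x : P, V.space x}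
    (hsec : IsSecOn V E s) (U : A) :
    IsSecOn V E (fun x => (projA hd x U (s x)).1) := by
  intro x y h hx hy
  show V.map h ((projA hd x U (s x)).1) = (projA hd y U (s y)).1
  rw [← hsec h hx hy, projA_natural]

theorem projA_vanish (hd : IsDecomp k V A) {I : Set P} {s : ∀ x : P, V.space x}
    (hvan : Vanish V I s) (U : A) :
    Vanish V I (fun x => (projA hd x U (s x)).1) := by
  intro x y h hx hy
  show V.map h ((projA hd x U (s x)).1) = 0
  rw [← projA_natural hd h U (s x), hvan h hx hy]
  simp

/-- Auxiliary functional on the direct sum, reading off the `M(I)`-coordinate. -/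
noncomputable def thetaAux (hd : IsDecomp k V A) (I : Set P) (U : A) {hIc : IsConvexIn I}
    (φ : PersIso k (PersSubmod.toPersMod k (U : PersSubmod k V)) (constMod k I hIc)) :
    (Π₀ x : P, V.space x) →ₗ[k] k :=
  DFinsupp.lsum ℕ fun x =>
    if _ : x ∈ I then
      (constSub k I x).subtype ∘ₗ ((φ.app x).toLinearMap ∘ₗ projA hd x U)
    else 0

/-- The counting functional attached to a summand isomorphic to `M(I)`. -/
noncomputable def theta (hd : IsDecomp k V A) (I : Set P) (x₀ : P) (U : A)
    {hIc : IsConvexIn I}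
    (φ : PersIso k (PersSubmod.toPersMod k (U : PersSubmod k V)) (constMod k I hIc)) :
    V.space x₀ →ₗ[k] k :=
  (thetaAux hd I U φ).comp (DFinsupp.lsingle x₀)

theorem lsum_lsingle {F : ∀ x : P, V.space x →ₗ[k] k} (i : P) (m : V.space i) :
    (DFinsupp.lsum ℕ F) (DFinsupp.lsingle (R := k) i m) = F i m := by
  rw [show (DFinsupp.lsingle (R := k) i m : Π₀ x : P, V.space x) = DFinsupp.single i m from rfl,
    DFinsupp.lsum_single]

theorem theta_apply (hd : IsDecomp k V A) {I : Set P} {x₀ : P} (hx₀ : x₀ ∈ I) (U : A)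
    {hIc : IsConvexIn I}
    (φ : PersIso k (PersSubmod.toPersMod k (U : PersSubmod k V)) (constMod k I hIc))
    (v : V.space x₀) :
    theta hd I x₀ U φ v = cval φ x₀ (projA hd x₀ U v) := by
  unfold theta thetaAux
  rw [LinearMap.comp_apply, lsum_lsingle, dif_pos hx₀]
  rfl

theorem thetaAux_ker (hd : IsDecomp k V A) {I : Set P} (U : A) {hIc : IsConvexIn I}
    (φ : PersIso k (PersSubmod.toPersMod k (U : PersSubmod k V)) (constMod k I hIc)) :
    Rrel V I ≤ LinearMap.ker (thetaAux hd I U φ) := by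
  rw [Rrel, Submodule.span_le]
  rintro f ⟨x, y, h, a, hxI, hyI, rfl⟩
  simp only [SetLike.mem_coe, LinearMap.mem_ker, map_sub]
  unfold thetaAux
  rw [lsum_lsingle, lsum_lsingle, dif_pos hxI, dif_pos hyI]
  have hmap : V.map h (projA hd x U a).1 = (projA hd y U (V.map h a)).1 :=
    (projA_natural hd h U a).symm
  have hstep := sec_val_step φ h (projA hd x U a) (projA hd y U (V.map h a)) hmap
  rw [if_pos hyI] at hstep
  show cval φ x (projA hd x U a) - cval φ y (projA hd y U (V.map h a)) = 0
  rw [hstep, sub_self]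

theorem theta_ker_S (hd : IsDecomp k V A) {I : Set P} {x₀ : P} (hI : IsPosetInterval I)
    (hx₀ : x₀ ∈ I) (U : A) {hIc : IsConvexIn I}
    (φ : PersIso k (PersSubmod.toPersMod k (U : PersSubmod k V)) (constMod k I hIc)) :
    Ssub V I x₀ ≤ LinearMap.ker (theta hd I x₀ U φ) := by
  rw [Ssub, Submodule.span_le]
  rintro v ⟨y₀, hy₀, ⟨x₁, hx₁, hyx⟩, t, htsec, htvan, rfl⟩
  simp only [SetLike.mem_coe, LinearMap.mem_ker]
  rw [theta_apply hd hx₀ U φ]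
  have hcsec := projA_sec hd htsec U
  have h1 : (projA hd y₀ U (t y₀)).1 = 0 :=
    carrier_zero φ hy₀ (projA hd y₀ U (t y₀))
  have h2 : (projA hd x₁ U (t x₁)).1 = 0 := by
    have h3 : V.map hyx ((projA hd y₀ U (t y₀)).1) = (projA hd x₁ U (t x₁)).1 :=
      hcsec hyx (Set.mem_insert y₀ I) (Set.mem_insert_of_mem _ hx₁)
    rw [h1, map_zero] at h3
    exact h3.symm
  refine chain_prop hI.2.2 hx₁ hx₀ (fun z => cval φ z (projA hd z U (t z)) = 0) ?_ ?_
  · show cval φ x₁ (projA hd x₁ U (t x₁)) = 0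
    have h4 : projA hd x₁ U (t x₁) = 0 := Subtype.ext (by rw [h2]; rfl)
    unfold cval
    erw [h4, map_zero]
    rfl
  · rintro a b haI hbI (hab | hba) hpa
    · have hmap : V.map hab ((projA hd a U (t a)).1) = (projA hd b U (t b)).1 :=
        hcsec hab (Set.mem_insert_of_mem _ haI) (Set.mem_insert_of_mem _ hbI)
      have hstep := sec_val_step φ hab _ _ hmap
      rw [hstep, if_pos hbI, hpa]
    · have hmap : V.map hba ((projA hd b U (t b)).1) = (projA hd a U (t a)).1 :=
        hcsec hba (Set.mem_insert_of_mem _ hbI) (Set.mem_insert_of_mem _ haI)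
      have hstep := sec_val_step φ hba _ _ hmap
      rw [if_pos haI] at hstep
      rw [← hstep]
      exact hpa

theorem theta_ker_N (hd : IsDecomp k V A) {I : Set P} {x₀ : P} (hI : IsPosetInterval I)
    (hx₀ : x₀ ∈ I) (U : A) {hIc : IsConvexIn I}
    (φ : PersIso k (PersSubmod.toPersMod k (U : PersSubmod k V)) (constMod k I hIc)) :
    Nsub V I x₀ ≤ LinearMap.ker (theta hd I x₀ U φ) := by
  refine sup_le (theta_ker_S hd hI hx₀ U φ) ?_
  intro v hv
  rw [LinearMap.mem_ker]
  rw [show theta hd I x₀ U φ v = thetaAux hd I U φ (DFinsupp.lsingle (R := k) x₀ v) from rfl]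
  exact thetaAux_ker hd U φ (mem_Ksub.mp hv)

theorem theta_secU_self (hd : IsDecomp k V A) {I : Set P} {x₀ : P} (hx₀ : x₀ ∈ I) (U : A)
    {hIc : IsConvexIn I}
    (φ : PersIso k (PersSubmod.toPersMod k (U : PersSubmod k V)) (constMod k I hIc)) :
    theta hd I x₀ U φ (secU φ x₀) = 1 := by
  rw [theta_apply hd hx₀ U φ]
  have h1 : (projA hd x₀ U (secU φ x₀)).1 = secU φ x₀ := by
    rw [projA_mem hd x₀ U U _ (secU_mem φ x₀), if_pos rfl]
  have h2 : projA hd x₀ U (secU φ x₀)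
      = ((φ.app x₀).symm (oneConst I x₀) : (U : PersSubmod k V).carrier x₀) :=
    Subtype.ext (by rw [h1]; rfl)
  rw [h2]
  unfold cval
  erw [LinearEquiv.apply_symm_apply]
  exact oneConst_val hx₀

theorem theta_secU_ne (hd : IsDecomp k V A) {I : Set P} {x₀ : P} (hx₀ : x₀ ∈ I) (U U' : A)
    (hne : U ≠ U') {hIc : IsConvexIn I}
    (φ : PersIso k (PersSubmod.toPersMod k (U : PersSubmod k V)) (constMod k I hIc))
    (φ' : PersIso k (PersSubmod.toPersMod k (U' : PersSubmod k V)) (constMod k I hIc)) :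
    theta hd I x₀ U φ (secU φ' x₀) = 0 := by
  rw [theta_apply hd hx₀ U φ]
  have h1 : (projA hd x₀ U (secU φ' x₀)).1 = 0 := by
    rw [projA_mem hd x₀ U U' _ (secU_mem φ' x₀), if_neg hne]
  have h2 : projA hd x₀ U (secU φ' x₀) = 0 := Subtype.ext (by rw [h1]; rfl)
  rw [h2]
  unfold cval
  erw [map_zero]
  rfl

/-- Main counting lemma: for any interval decomposition `A`, the subquotient
`W/(N ∩ W)` at `x₀ ∈ I` has a basis indexed by the summands isomorphic to `M(I)`. -/
theorem basis_count {I : Set P} (hI : IsPosetInterval I) {x₀ : P} (hx₀ : x₀ ∈ I)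
    {A : Set (PersSubmod k V)} (hA : IsIntervalDecomp k V A) :
    Nonempty (Module.Basis
      {T : PersSubmod k V // T ∈ A ∧
        Nonempty (PersIso k (PersSubmod.toPersMod k T) (constMod k I hI.2.1))} k
      (↥(Wsub V I x₀) ⧸ (Nsub V I x₀).comap (Wsub V I x₀).subtype)) := by
  classical
  have hd := hA.1
  set C := {T : PersSubmod k V // T ∈ A ∧
    Nonempty (PersIso k (PersSubmod.toPersMod k T) (constMod k I hI.2.1))} with hC
  let uA : C → A := fun T => ⟨T.1, T.2.1⟩
  let φf : ∀ T : C,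
      PersIso k (PersSubmod.toPersMod k ((uA T : A) : PersSubmod k V)) (constMod k I hI.2.1) :=
    fun T => Classical.choice T.2.2
  have hvW : ∀ T : C, secU (φf T) x₀ ∈ Wsub V I x₀ := fun T =>
    ⟨secU (φf T), secU_sec (φf T), secU_vanish (φf T), rfl⟩
  let fam : C → (↥(Wsub V I x₀) ⧸ (Nsub V I x₀).comap (Wsub V I x₀).subtype) :=
    fun T => Submodule.Quotient.mk ⟨secU (φf T) x₀, hvW T⟩
  have huAinj : ∀ T T' : C, uA T = uA T' → T = T' := by
    intro T T' h
    exact Subtype.ext (congrArg (fun x : ↥A => x.1) h)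
  have hli : LinearIndependent k fam := by
    rw [linearIndependent_iff']
    intro t g hsum T₀ hT₀
    have h1 : (∑ T ∈ t, g T • (⟨secU (φf T) x₀, hvW T⟩ : Wsub V I x₀))
        ∈ (Nsub V I x₀).comap (Wsub V I x₀).subtype := by
      rw [← Submodule.ker_mkQ ((Nsub V I x₀).comap (Wsub V I x₀).subtype),
        LinearMap.mem_ker, map_sum]
      simpa only [map_smul, Submodule.mkQ_apply] using hsum
    rw [Submodule.mem_comap] at h1
    have h2 : (∑ T ∈ t, g T • secU (φf T) x₀) ∈ Nsub V I x₀ := by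
      simpa using h1
    have h4 := theta_ker_N hd hI hx₀ (uA T₀) (φf T₀) h2
    rw [LinearMap.mem_ker, map_sum] at h4
    have h5 : ∀ T ∈ t, theta hd I x₀ (uA T₀) (φf T₀) (g T • secU (φf T) x₀)
        = if T₀ = T then g T else 0 := by
      intro T _
      rw [map_smul, smul_eq_mul]
      by_cases hTT : T₀ = T
      · subst hTT
        rw [theta_secU_self hd hx₀ (uA T₀) (φf T₀), mul_one, if_pos rfl]
      · have hne : uA T₀ ≠ uA T := fun e => hTT (huAinj _ _ e)
        rw [theta_secU_ne hd hx₀ (uA T₀) (uA T) hne (φf T₀) (φf T), mul_zero, if_neg hTT]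
    rw [Finset.sum_congr rfl h5, Finset.sum_ite_eq, if_pos hT₀] at h4
    exact h4
  have hsp : ⊤ ≤ Submodule.span k (Set.range fam) := by
    intro z _
    obtain ⟨⟨w, hw⟩, rfl⟩ := Submodule.Quotient.mk_surjective _ z
    have hw' : ∃ s : ∀ x : P, V.space x, IsSecOn V I s ∧ Vanish V I s ∧ s x₀ = w := hw
    obtain ⟨sw, hsec, hvan, hsx₀⟩ := hw'
    obtain ⟨t, ht0, htsum⟩ := exists_projA_sum hd x₀ w
    have hcompW : ∀ U : A, ((projA hd x₀ U w).1 : V.space x₀) ∈ Wsub V I x₀ := by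
      intro U
      refine ⟨fun x => (projA hd x U (sw x)).1, projA_sec hd hsec U,
        projA_vanish hd hvan U, ?_⟩
      show (projA hd x₀ U (sw x₀)).1 = (projA hd x₀ U w).1
      rw [hsx₀]
    have hterm : ∀ U ∈ t,
        Submodule.Quotient.mk (⟨(projA hd x₀ U w).1, hcompW U⟩ : Wsub V I x₀)
          ∈ Submodule.span k (Set.range fam) := by
      intro U hU
      by_cases hCmem : Nonempty (PersIso k (PersSubmod.toPersMod k (U : PersSubmod k V))
          (constMod k I hI.2.1))
      · set T : C := ⟨(U : PersSubmod k V), U.2, hCmem⟩ with hT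
        have hsm : (projA hd x₀ U w).1
            = cval (φf T) x₀ (projA hd x₀ U w) • secU (φf T) x₀ :=
          comp_smul (φf T) hx₀ (projA hd x₀ U w)
        have hq : Submodule.Quotient.mk (⟨(projA hd x₀ U w).1, hcompW U⟩ : Wsub V I x₀)
            = cval (φf T) x₀ (projA hd x₀ U w) • fam T := by
          rw [show fam T = Submodule.Quotient.mk ⟨secU (φf T) x₀, hvW T⟩ from rfl,
            ← Submodule.Quotient.mk_smul]
          congr 1
          apply Subtype.ext
          rw [show ((⟨(projA hd x₀ U w).1, hcompW U⟩ : Wsub V I x₀) : V.space x₀)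
            = (projA hd x₀ U w).1 from rfl, hsm]
          rfl
        rw [hq]
        exact Submodule.smul_mem _ _ (Submodule.subset_span (Set.mem_range_self T))
      · obtain ⟨J, hJ, hψ⟩ := hA.2 U.1 U.2
        have hJI : J ≠ I := by
          rintro rfl
          exact hCmem hψ
        have hmemN : (projA hd x₀ U w).1 ∈ Nsub V I x₀ := by
          have hres := comp_mem_N hI hx₀ hJ (Classical.choice hψ) hJI
            (fun x => (projA hd x U (sw x)).2) (projA_sec hd hsec U)
            (projA_vanish hd hvan U)
          rw [hsx₀] at hres
          exact hres
        have hzero : Submodule.Quotient.mk (⟨(projA hd x₀ U w).1, hcompW U⟩ : Wsub V I x₀)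
            = (0 : ↥(Wsub V I x₀) ⧸ (Nsub V I x₀).comap (Wsub V I x₀).subtype) := by
          rw [Submodule.Quotient.mk_eq_zero, Submodule.mem_comap]
          simpa using hmemN
        rw [hzero]
        exact Submodule.zero_mem _
    have hsplit : (⟨w, hw⟩ : Wsub V I x₀) = ∑ U ∈ t, ⟨(projA hd x₀ U w).1, hcompW U⟩ := by
      apply Subtype.ext
      rw [show ((⟨w, hw⟩ : Wsub V I x₀) : V.space x₀) = w from rfl,
        AddSubmonoidClass.coe_finset_sum]
      exact htsum
    have hmksum : (Submodule.Quotient.mk (⟨w, hw⟩ : Wsub V I x₀) :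
          ↥(Wsub V I x₀) ⧸ (Nsub V I x₀).comap (Wsub V I x₀).subtype)
        = ∑ U ∈ t, ((Nsub V I x₀).comap (Wsub V I x₀).subtype).mkQ
            (⟨(projA hd x₀ U w).1, hcompW U⟩ : Wsub V I x₀) := by
      rw [hsplit,
        show (Submodule.Quotient.mk
            (∑ U ∈ t, (⟨(projA hd x₀ U w).1, hcompW U⟩ : Wsub V I x₀)) :
          ↥(Wsub V I x₀) ⧸ (Nsub V I x₀).comap (Wsub V I x₀).subtype)
          = ((Nsub V I x₀).comap (Wsub V I x₀).subtype).mkQ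
            (∑ U ∈ t, (⟨(projA hd x₀ U w).1, hcompW U⟩ : Wsub V I x₀)) from rfl, map_sum]
    rw [hmksum]
    exact Submodule.sum_mem _ fun U hU => hterm U hU
  exact ⟨Module.Basis.mk hli hsp⟩

end IntervalUnique

end UniquenessProof

/-- Theorem A (uniqueness of interval decompositions): for two interval
decompositions `V = ⊕_{U ∈ A} U = ⊕_{W ∈ B} W` and an interval `I`, the summands of
`A` isomorphic to `M(I)` and the summands of `B` isomorphic to `M(I)` have the same
cardinality. -/
theorem interval_decomp_multiplicity_unique (P : Type v) [PartialOrder P]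
    (V : PersMod.{u, v, w} k P) (A B : Set (PersSubmod k V))
    (hA : IsIntervalDecomp k V A) (hB : IsIntervalDecomp k V B)
    (I : Set P) (hI : IsPosetInterval I) :
    Cardinal.mk {T : PersSubmod k V // T ∈ A ∧
        Nonempty (PersIso k T.toPersMod (constMod k I hI.2.1))} =
      Cardinal.mk {T : PersSubmod k V // T ∈ B ∧
        Nonempty (PersIso k T.toPersMod (constMod k I hI.2.1))} := by
  classical
  obtain ⟨x₀, hx₀⟩ := hI.1
  obtain ⟨bA⟩ := IntervalUnique.basis_count hI hx₀ hA
  obtain ⟨bB⟩ := IntervalUnique.basis_count hI hx₀ hB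
  have h1 := bA.mk_eq_rank
  have h2 := bB.mk_eq_rank
  exact Cardinal.lift_injective (h1.trans h2.symm)
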